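/- Let K be a field, v a nontrivial valuation on K, and T = (1 + M_v)·K*². Then K = T - T, i.e., every element of K is a difference of two elements of T. -/

import Mathlib

/-- For `T = (1 + M_v)·K*²` with `v` a nontrivial valuation, `K = T - T`. -/
theorem stmt_3 {K Γ₀ : Type*} [Field K] [LinearOrderedCommGroupWithZero Γ₀]
    (v : Valuation K Γ₀) (hv : ∃ p : K, p ≠ 0 ∧ v p ≠ 1)
    (T : Set K)
    (hT : T = {t : K | ∃ u c : K, v (u - 1) < 1 ∧ c ≠ 0 ∧ t = u * c ^ 2}) :
    ∀ y : K, ∃ t₁ ∈ T, ∃ t₂ ∈ T, y = t₁ - t₂ := by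
  intro y
  obtain ⟨p, hp0, hp1⟩ := hv
  have key : ∀ a b : Γ₀, 1 ≤ a → a ≠ 0 → 1 < b → 1 < a * b := by
    intro a b ha ha0 hb
    simpa using mul_lt_mul_of_le_of_lt_of_nonneg_of_pos ha hb zero_le' (zero_lt_iff.mpr ha0)
  -- get q with v q > 1
  obtain ⟨q, hq0, hq1⟩ : ∃ q : K, q ≠ 0 ∧ 1 < v q := by
    rcases lt_or_gt_of_ne hp1 with h | h
    · refine ⟨p⁻¹, inv_ne_zero hp0, ?_⟩
      rw [map_inv₀]
      exact (one_lt_inv₀ (zero_lt_iff.mpr (v.ne_zero_iff.mpr hp0))).mpr h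
    · exact ⟨p, hp0, h⟩
  have hq2 : (1 : Γ₀) < v q ^ 2 := by
    rw [sq]; exact key _ _ hq1.le (zero_lt_iff.mp (zero_lt_one.trans hq1)) hq1
  -- get c with v y < v c ^ 2
  obtain ⟨c, hc0, hc⟩ : ∃ c : K, c ≠ 0 ∧ v y < v (c ^ 2) := by
    rcases le_or_gt (v y) 1 with h | h
    · refine ⟨q, hq0, lt_of_le_of_lt h ?_⟩
      rw [map_pow]; exact hq2
    · have hy0 : y ≠ 0 := by
        intro h0; rw [h0, map_zero] at h; exact absurd h (not_lt.mpr zero_le_one)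
      have hvy0 : v y ≠ 0 := v.ne_zero_iff.mpr hy0
      refine ⟨y * q, mul_ne_zero hy0 hq0, ?_⟩
      rw [map_pow, map_mul, mul_pow, sq (v y), mul_assoc]
      have h3 : 1 < v y * v q ^ 2 := key _ _ h.le hvy0 hq2
      calc v y = v y * 1 := (mul_one _).symm
        _ < v y * (v y * v q ^ 2) := mul_lt_mul_of_le_of_lt_of_nonneg_of_pos le_rfl h3 zero_le' (zero_lt_iff.mpr hvy0)
  have hc2 : (c : K) ^ 2 ≠ 0 := pow_ne_zero 2 hc0
  have hvc2 : v (c ^ 2) ≠ 0 := v.ne_zero_iff.mpr hc2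
  refine ⟨(1 + y / c ^ 2) * c ^ 2, ?_, 1 * c ^ 2, ?_, ?_⟩
  · rw [hT]
    refine ⟨1 + y / c ^ 2, c, ?_, hc0, rfl⟩
    have he : (1 + y / c ^ 2) - 1 = y / c ^ 2 := by ring
    rw [he, map_div₀]
    rw [div_lt_iff₀ (zero_lt_iff.mpr hvc2), one_mul]
    exact hc
  · rw [hT]
    exact ⟨1, c, by simp, hc0, rfl⟩
  · field_simp; ring
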